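/- The run of the sphere automaton is sound on paths: let ρ be a run of the sphere automaton B_r on a nested word W, let i be a position, let E_i be the unique extended r-sphere in ρ(i) whose active node equals its center. Then for every path γ_i = j₀ ↔ j₁ ↔ … ↔ j_d in the Gaifman graph of E_i starting at the center, there exists a unique sequence of positions i₀ = i, i₁, …, i_d of W such that for each k, E_i with active node j_k belongs to ρ(i_k), and each edge (j_k, j_{k+1}) of the sphere is simulated by a corresponding edge (i_k, i_{k+1}) of W (same labels; ⋖-edges of the sphere map to ⋖-edges of W and μ-edges to μ-edges, in the same direction). -/

import Mathlib

/-- The *kind* of a letter in a `K`-stack call-return alphabet: a call of some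
stack `s`, a return of some stack `s`, or an internal action. -/
inductive CRKind (K : ℕ) where
  | call (s : Fin K)
  | ret (s : Fin K)
  | int

/-- A `K`-stack call-return alphabet over the letters `A`: every letter is
(exclusively) a call of one stack, a return of one stack, or internal.  This
encodes the pairwise disjointness of the collection
`⟨{(Σ_c^s, Σ_r^s)}_{s∈[K]}, Σ_int⟩` together with `Σ` being their union. -/
structure CRAlphabet (K : ℕ) (A : Type) where
  kind : A → CRKind K

namespace CRAlphabet

variable {K : ℕ} {A : Type}

def callSet (h : CRAlphabet K A) (s : Fin K) : Set A := {a | h.kind a = .call s}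
def retSet (h : CRAlphabet K A) (s : Fin K) : Set A := {a | h.kind a = .ret s}
def intSet (h : CRAlphabet K A) : Set A := {a | h.kind a = .int}

end CRAlphabet

/-- `s`-well-formed strings: generated by the grammar
`A ::= aAb | AA | ε | c` with `a ∈ c`, `b ∈ r`, `c ∉ c ∪ r`. -/
inductive SWellFormed {A : Type} (c r : Set A) : List A → Prop where
  | nil : SWellFormed c r []
  | single {x : A} : x ∉ c → x ∉ r → SWellFormed c r [x]
  | wrap {a b : A} {u : List A} : a ∈ c → b ∈ r → SWellFormed c r u →
      SWellFormed c r (a :: u ++ [b])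
  | concat {u v : List A} : SWellFormed c r u → SWellFormed c r v →
      SWellFormed c r (u ++ v)

/-- The matching relation `μ^s` of the nested word determined by the string
`w` (positions `0`-based): `(i,j) ∈ μ^s` iff `i < j`, `λ(i) ∈ Σ_c^s`,
`λ(j) ∈ Σ_r^s` and `λ(i+1) … λ(j-1)` is `s`-well formed. -/
def Matched {K : ℕ} {A : Type} (h : CRAlphabet K A) (w : List A) (s : Fin K)
    (i j : ℕ) : Prop :=
  i < j ∧ j < w.length ∧
  (∃ a, w[i]? = some a ∧ a ∈ h.callSet s) ∧
  (∃ b, w[j]? = some b ∧ b ∈ h.retSet s) ∧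
  SWellFormed (h.callSet s) (h.retSet s) ((w.take j).drop (i + 1))

/-- The full matching relation `μ = ⋃_s μ^s`. -/
def MuAny {K : ℕ} {A : Type} (h : CRAlphabet K A) (w : List A) (i j : ℕ) : Prop :=
  ∃ s, Matched h w s i j

/-- Gaifman adjacency of positions of the nested word of `w`:
`i ↔ j` iff `(i,j)` or `(j,i)` is in `⋖ ∪ μ`. -/
def Adj {K : ℕ} {A : Type} (h : CRAlphabet K A) (w : List A) (i j : ℕ) : Prop :=
  (j = i + 1 ∧ j < w.length) ∨ (i = j + 1 ∧ i < w.length) ∨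
    MuAny h w i j ∨ MuAny h w j i

/-- `DistLE h w d i j`: the Gaifman distance between `i` and `j` in the
nested word of `w` is at most `d`. -/
def DistLE {K : ℕ} {A : Type} (h : CRAlphabet K A) (w : List A) :
    ℕ → ℕ → ℕ → Prop
  | 0, i, j => i = j
  | d + 1, i, j => i = j ∨ ∃ k, Adj h w i k ∧ DistLE h w d k j

/-- The ball of radius `r` around position `i` (the universe of the
`r`-sphere `Sph_r(w,i)`). -/
def ball {K : ℕ} {A : Type} (h : CRAlphabet K A) (w : List A) (r i : ℕ) : Set ℕ :=
  {j | DistLE h w r i j}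

/-- `f` is an isomorphism from the `r`-sphere of `v` around `c` onto the
`r`-sphere of `w` around `i` (mapping center to center and preserving labels,
successor edges and matching edges). -/
def SphIsoF {K : ℕ} {A : Type} (h : CRAlphabet K A) (r : ℕ) (v : List A) (c : ℕ)
    (w : List A) (i : ℕ) (f : ℕ → ℕ) : Prop :=
  c < v.length ∧ i < w.length ∧ f c = i ∧
  Set.BijOn f (ball h v r c) (ball h w r i) ∧
  (∀ j ∈ ball h v r c, v[j]? = w[(f j)]?) ∧
  (∀ j ∈ ball h v r c, ∀ k ∈ ball h v r c,
    ((k = j + 1 ∧ k < v.length) ↔ (f k = f j + 1 ∧ f k < w.length)) ∧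
    (∀ s, Matched h v s j k ↔ Matched h w s (f j) (f k)))

/-- The `r`-sphere of `v` around `c` is isomorphic to the `r`-sphere of `w`
around `i`. -/
def SphIso {K : ℕ} {A : Type} (h : CRAlphabet K A) (r : ℕ) (v : List A) (c : ℕ)
    (w : List A) (i : ℕ) : Prop :=
  ∃ f, SphIsoF h r v c w i f

/-- A (representation of an) extended `r`-sphere, given by an ambient nested
word `word` together with the sphere center `ctr`, the active node `act` and
a color `col`; the sphere itself is the `r`-sphere of `word` around `ctr`. -/
structure ESph (A : Type) where
  word : List A
  ctr : ℕ
  act : ℕ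
  col : ℕ

/-- The representation is valid: the center is a position and the active node
lies in the sphere. -/
def ESph.ValidE {A : Type} (h : CRAlphabet 2 A) (r : ℕ) (E : ESph A) : Prop :=
  E.ctr < E.word.length ∧ DistLE h E.word r E.ctr E.act

/-- Successor edges of the sphere (both endpoints within the ball). -/
def SSucc {A : Type} (h : CRAlphabet 2 A) (r : ℕ) (E : ESph A) (j k : ℕ) : Prop :=
  DistLE h E.word r E.ctr j ∧ DistLE h E.word r E.ctr k ∧
    k = j + 1 ∧ k < E.word.length

/-- Matching edges of the sphere (both endpoints within the ball). -/
def SMu {A : Type} (h : CRAlphabet 2 A) (r : ℕ) (E : ESph A) (j k : ℕ) : Prop :=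
  DistLE h E.word r E.ctr j ∧ DistLE h E.word r E.ctr k ∧ MuAny h E.word j k

/-- Gaifman adjacency inside the sphere. -/
def SAdj {A : Type} (h : CRAlphabet 2 A) (r : ℕ) (E : ESph A) (j k : ℕ) : Prop :=
  SSucc h r E j k ∨ SSucc h r E k j ∨ SMu h r E j k ∨ SMu h r E k j

/-- The extended sphere `E[i]`: `E` with active node replaced by `i`. -/
def setAct {A : Type} (E : ESph A) (i : ℕ) : ESph A := { E with act := i }

/-- Isomorphism of the cores (the underlying pointed spheres). -/
def CoreIsoF {A : Type} (h : CRAlphabet 2 A) (r : ℕ) (E E' : ESph A)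
    (f : ℕ → ℕ) : Prop :=
  SphIsoF h r E.word E.ctr E'.word E'.ctr f

/-- Isomorphism of extended spheres: equal colors and a core isomorphism
mapping active node to active node. -/
def EIso {A : Type} (h : CRAlphabet 2 A) (r : ℕ) (E E' : ESph A) : Prop :=
  E.col = E'.col ∧ ∃ f, CoreIsoF h r E E' f ∧ f E.act = E'.act

/-- Membership of an extended sphere in a state, up to isomorphism. -/
def MemE {A : Type} (h : CRAlphabet 2 A) (r : ℕ) (𝓔 : Set (ESph A))
    (E : ESph A) : Prop :=
  ∃ E' ∈ 𝓔, EIso h r E E'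

/-- The label of the active node. -/
def LabelAt {A : Type} (E : ESph A) : Option A := E.word[E.act]?

/-- A valid state of the sphere automaton `B_r`: a set of (valid) extended
spheres such that (a) there is a unique (up to isomorphism) member whose
active node is the center, (b) all active nodes carry the same label, (c) two
members with isomorphic cores and equal colors have the same active node. -/
def ValidState {A : Type} (h : CRAlphabet 2 A) (r : ℕ) (𝓔 : Set (ESph A)) : Prop :=
  (∀ E ∈ 𝓔, E.ValidE h r) ∧
  (∃ E ∈ 𝓔, E.act = E.ctr) ∧
  (∀ E ∈ 𝓔, ∀ E' ∈ 𝓔, E.act = E.ctr → E'.act = E'.ctr → EIso h r E E') ∧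
  (∃ a : A, ∀ E ∈ 𝓔, LabelAt E = some a) ∧
  (∀ E ∈ 𝓔, ∀ E' ∈ 𝓔, E.col = E'.col → (∃ f, CoreIsoF h r E E' f) →
    EIso h r E E')

/-- The active node is at distance exactly `r` from the center. -/
def AtRadius {A : Type} (h : CRAlphabet 2 A) (r : ℕ) (E : ESph A) : Prop :=
  ∀ d, d < r → ¬ DistLE h E.word d E.ctr E.act

/-- The shared transition conditions (2)–(7) of the sphere automaton. -/
def Cond27 {A : Type} (h : CRAlphabet 2 A) (r : ℕ) (𝓔 𝓔' : Set (ESph A))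
    (a : A) : Prop :=
  (∀ E ∈ 𝓔', LabelAt E = some a) ∧
  (∀ E ∈ 𝓔, ∀ i, DistLE h E.word r E.ctr i → MemE h r 𝓔' (setAct E i) →
    SSucc h r E E.act i) ∧
  (∀ E ∈ 𝓔', (𝓔 ≠ ∅ ∧ ¬ ∃ i, SSucc h r E i E.act) → AtRadius h r E) ∧
  (∀ E ∈ 𝓔, (¬ ∃ i, SSucc h r E E.act i) → AtRadius h r E) ∧
  (∀ E ∈ 𝓔', ∀ i, SSucc h r E i E.act → MemE h r 𝓔 (setAct E i)) ∧
  (∀ E ∈ 𝓔, ∀ i, SSucc h r E E.act i → MemE h r 𝓔' (setAct E i))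

/-- The transition relation `δ₁` of `B_r`, including condition (1): active
nodes of the target state have no matching predecessor within their sphere. -/
def Trans1 {A : Type} (h : CRAlphabet 2 A) (r : ℕ) (𝓔 : Set (ESph A)) (a : A)
    (𝓔' : Set (ESph A)) : Prop :=
  (𝓔 = ∅ ∨ ValidState h r 𝓔) ∧ ValidState h r 𝓔' ∧ 𝓔'.Nonempty ∧
  (∀ E ∈ 𝓔', ¬ ∃ j, SMu h r E j E.act) ∧
  Cond27 h r 𝓔 𝓔' a

/-- The transition conditions (3')–(7') of the sphere automaton. -/
def Cond3'7' {A : Type} (h : CRAlphabet 2 A) (r : ℕ)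
    (𝓔c 𝓔' : Set (ESph A)) : Prop :=
  (∀ E ∈ 𝓔c, ∀ i, DistLE h E.word r E.ctr i → MemE h r 𝓔' (setAct E i) →
    SMu h r E E.act i) ∧
  (∀ E ∈ 𝓔', (¬ ∃ j, SMu h r E j E.act) → AtRadius h r E) ∧
  (∀ E ∈ 𝓔c, (¬ ∃ j, SMu h r E E.act j) → AtRadius h r E) ∧
  (∀ E ∈ 𝓔', ∀ j, SMu h r E j E.act → MemE h r 𝓔c (setAct E j)) ∧
  (∀ E ∈ 𝓔c, ∀ j, SMu h r E E.act j → MemE h r 𝓔' (setAct E j))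

/-- The transition relation `δ₂` of `B_r` (used at matched returns,
consulting the state `𝓔c` reached at the matching call). -/
def Trans2 {A : Type} (h : CRAlphabet 2 A) (r : ℕ) (𝓔c 𝓔 : Set (ESph A))
    (a : A) (𝓔' : Set (ESph A)) : Prop :=
  ValidState h r 𝓔c ∧ ValidState h r 𝓔 ∧ ValidState h r 𝓔' ∧
  𝓔c.Nonempty ∧ 𝓔.Nonempty ∧ 𝓔'.Nonempty ∧
  Cond27 h r 𝓔 𝓔' a ∧ Cond3'7' h r 𝓔c 𝓔'

/-- `ρ` is a run of the sphere automaton `B_r` on the nested word of `w`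
(initial state: `∅`). -/
def IsRunB {A : Type} (h : CRAlphabet 2 A) (r : ℕ) (w : List A)
    (ρ : ℕ → Set (ESph A)) : Prop :=
  (∃ a, w[0]? = some a ∧ Trans1 h r ∅ a (ρ 0)) ∧
  ∀ i, 0 < i → i < w.length → ∃ a, w[i]? = some a ∧
    ((∃ j, MuAny h w j i ∧ Trans2 h r (ρ j) (ρ (i - 1)) a (ρ i)) ∨
     ((¬ ∃ j, MuAny h w j i) ∧ Trans1 h r (ρ (i - 1)) a (ρ i)))

/-- Final states of `B_r`: no active node has a pending `⋖`- or
`μ`-successor. -/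
def FinalB {A : Type} (h : CRAlphabet 2 A) (r : ℕ) (𝓔 : Set (ESph A)) : Prop :=
  ∀ E ∈ 𝓔, (¬ ∃ k, SSucc h r E E.act k) ∧ (¬ ∃ k, SMu h r E E.act k)

/-- Calling states of `B_r`: some active node has a `μ`-successor. -/
def CallingB {A : Type} (h : CRAlphabet 2 A) (r : ℕ) (𝓔 : Set (ESph A)) : Prop :=
  ∃ E ∈ 𝓔, ∃ k, SMu h r E E.act k

/-- The run `ρ` of `B_r` on `w` is accepting. -/
def AcceptingB {A : Type} (h : CRAlphabet 2 A) (r : ℕ) (w : List A)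
    (ρ : ℕ → Set (ESph A)) : Prop :=
  FinalB h r (ρ (w.length - 1)) ∧
  ∀ i < w.length, CallingB h r (ρ i) → ∃ j, MuAny h w i j

section Cnt
variable {A : Type}

open Classical in
noncomputable def cnt (c r : Set A) : List A → ℤ
  | [] => 0
  | x :: u => (if x ∈ c then 1 else if x ∈ r then -1 else 0) + cnt c r u

lemma cnt_append (c r : Set A) (u v : List A) :
    cnt c r (u ++ v) = cnt c r u + cnt c r v := by
  induction u with
  | nil => simp [cnt]
  | cons x u ih => simp [cnt, ih]; ring

lemma swf_cnt {c r : Set A} (hd : ∀ a, a ∈ c → a ∈ r → False) {u : List A}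
    (hu : SWellFormed c r u) :
    cnt c r u = 0 ∧ ∀ p, 0 ≤ cnt c r (u.take p) := by
  induction hu with
  | nil => simp [cnt]
  | @single x hc hr =>
    constructor
    · simp [cnt, hc, hr]
    · intro p
      match p with
      | 0 => simp [cnt]
      | p + 1 => simp [cnt, hc, hr]
  | @wrap a b u hac hbr hu ih =>
    have hbnc : b ∉ c := fun hb => hd b hb hbr
    have hce : cnt c r [b] = -1 := by simp [cnt, hbnc, hbr]
    constructor
    · have : (a :: u ++ [b]) = a :: (u ++ [b]) := by simp
      rw [this]
      simp [cnt, cnt_append, ih.1, hac, hbnc, hbr]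
    · intro p
      match p with
      | 0 => simp [cnt]
      | p + 1 =>
        have : (a :: u ++ [b]).take (p+1) = a :: (u ++ [b]).take p := by simp
        rw [this]
        simp only [cnt, if_pos hac]
        rw [List.take_append, cnt_append]
        have h1 : 0 ≤ cnt c r (u.take p) := ih.2 p
        have h2 : -1 ≤ cnt c r ([b].take (p - u.length)) := by
          match hq : p - u.length with
          | 0 => simp [cnt]
          | q + 1 => simp [cnt, hbnc, hbr]
        linarith
  | @concat u v hu hv ihu ihv =>
    constructor
    · rw [cnt_append, ihu.1, ihv.1]; ring
    · intro p
      rw [List.take_append, cnt_append]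
      have h1 := ihu.2 p
      have h2 := ihv.2 (p - u.length)
      linarith

end Cnt

section Uniq
variable {K : ℕ} {A : Type}

lemma call_ret_disj (h : CRAlphabet K A) (s s' : Fin K) :
    ∀ a, a ∈ h.callSet s → a ∈ h.retSet s' → False := by
  intro a ha hb
  simp only [CRAlphabet.callSet, CRAlphabet.retSet, Set.mem_setOf_eq] at ha hb
  rw [ha] at hb; cases hb

lemma call_stack_eq (h : CRAlphabet K A) {s s' : Fin K} {a : A}
    (ha : a ∈ h.callSet s) (hb : a ∈ h.callSet s') : s = s' := by
  simp only [CRAlphabet.callSet, Set.mem_setOf_eq] at ha hb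
  rw [ha] at hb; cases hb; rfl

lemma ret_stack_eq (h : CRAlphabet K A) {s s' : Fin K} {a : A}
    (ha : a ∈ h.retSet s) (hb : a ∈ h.retSet s') : s = s' := by
  simp only [CRAlphabet.retSet, Set.mem_setOf_eq] at ha hb
  rw [ha] at hb; cases hb; rfl

lemma matched_ret_lt_false (h : CRAlphabet K A) {w : List A} {s : Fin K}
    {i j1 j2 : ℕ} (h1 : Matched h w s i j1) (h2 : Matched h w s i j2)
    (hlt : j1 < j2) : False := by
  obtain ⟨hij1, hj1, ⟨a, ha, hac⟩, ⟨b1, hb1, hb1r⟩, hwf1⟩ := h1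
  obtain ⟨hij2, hj2, -, -, hwf2⟩ := h2
  set c := h.callSet s
  set rr := h.retSet s
  have hd : ∀ a, a ∈ c → a ∈ rr → False := call_ret_disj h s s
  have hb1c : b1 ∉ c := fun hb => hd b1 hb hb1r
  -- seg1 and the prefix of seg2
  set seg1 := (w.take j1).drop (i + 1) with hseg1
  have htake : w.take (j1 + 1) = w.take j1 ++ [b1] := by
    rw [List.take_succ, hb1]; rfl
  have hpre : (w.take (j1 + 1)).drop (i + 1) = seg1 ++ [b1] := by
    rw [htake, List.drop_append]
    have : i + 1 - (w.take j1).length = 0 := by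
      have : j1 ≤ w.length := le_of_lt hj1
      simp [List.length_take, Nat.sub_eq_zero_of_le, min_eq_left this]
      omega
    rw [this]
    simp [hseg1]
  -- seg2 decomposes
  have hdec : (w.take j2).drop (i + 1) = (seg1 ++ [b1]) ++ (w.take j2).drop (j1 + 1) := by
    rw [← hpre]
    have h1 : w.take j2 = (w.take (j1+1)) ++ (w.take j2).drop (j1 + 1) := by
      conv_lhs => rw [← List.take_append_drop (j1+1) (w.take j2)]
      rw [List.take_take, min_eq_left (by omega)]
    conv_lhs => rw [h1]
    rw [List.drop_append]
    have hlen : (w.take (j1+1)).length = j1 + 1 := by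
      rw [List.length_take]; omega
    have : i + 1 - (w.take (j1+1)).length = 0 := by omega
    rw [this, List.drop_zero]
  have hc1 := (swf_cnt hd hwf1).1
  have hc2 := (swf_cnt hd hwf2).2 ((seg1 ++ [b1]).length)
  rw [hdec, List.take_append] at hc2
  simp only [Nat.sub_self, List.take_length, List.take_zero, List.append_nil] at hc2
  rw [cnt_append] at hc2
  have : cnt c rr [b1] = -1 := by simp [cnt, hb1c, hb1r]
  rw [hc1, this] at hc2
  norm_num at hc2

lemma matched_call_lt_false (h : CRAlphabet K A) {w : List A} {s : Fin K}
    {i1 i2 j : ℕ} (h1 : Matched h w s i1 j) (h2 : Matched h w s i2 j)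
    (hlt : i1 < i2) : False := by
  obtain ⟨hij1, hj, -, ⟨b, hb, hbr⟩, hwf1⟩ := h1
  obtain ⟨hij2, -, ⟨a2, ha2, ha2c⟩, -, hwf2⟩ := h2
  set c := h.callSet s
  set rr := h.retSet s
  have hd : ∀ a, a ∈ c → a ∈ rr → False := call_ret_disj h s s
  set seg1 := (w.take j).drop (i1 + 1) with hseg1
  set seg2 := (w.take j).drop (i2 + 1) with hseg2
  set mid := (w.take i2).drop (i1 + 1) with hmid
  have hi2len : i2 < w.length := lt_of_lt_of_le hij2 (le_of_lt hj)
  have htake : w.take (i2 + 1) = w.take i2 ++ [a2] := by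
    rw [List.take_succ, ha2]; rfl
  have hpre : (w.take (i2 + 1)).drop (i1 + 1) = mid ++ [a2] := by
    rw [htake, List.drop_append]
    have : i1 + 1 - (w.take i2).length = 0 := by
      rw [List.length_take]; omega
    rw [this]; simp [hmid]
  have hdec : seg1 = (mid ++ [a2]) ++ seg2 := by
    rw [← hpre, hseg1, hseg2]
    have h1 : w.take j = (w.take (i2+1)) ++ (w.take j).drop (i2 + 1) := by
      conv_lhs => rw [← List.take_append_drop (i2+1) (w.take j)]
      rw [List.take_take, min_eq_left (by omega)]
    conv_lhs => rw [h1]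
    rw [List.drop_append]
    have hlen : (w.take (i2+1)).length = i2 + 1 := by
      rw [List.length_take]; omega
    have : i1 + 1 - (w.take (i2+1)).length = 0 := by omega
    rw [this, List.drop_zero]
  have hc1 := (swf_cnt hd hwf1).1
  have hc2 := (swf_cnt hd hwf2).1
  have hmidpre := (swf_cnt hd hwf1).2 mid.length
  rw [hdec] at hc1 hmidpre
  rw [List.append_assoc, List.take_append] at hmidpre
  simp only [Nat.sub_self, List.take_length, List.take_zero, List.append_nil] at hmidpre
  rw [cnt_append, cnt_append] at hc1
  have ha2nr : a2 ∉ rr := fun hx => hd a2 ha2c hx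
  have : cnt c rr [a2] = 1 := by simp [cnt, ha2c]
  rw [this, hc2] at hc1
  omega

lemma muAny_ret_unique (h : CRAlphabet K A) {w : List A} {i j1 j2 : ℕ}
    (h1 : MuAny h w i j1) (h2 : MuAny h w i j2) : j1 = j2 := by
  obtain ⟨s, hm1⟩ := h1
  obtain ⟨s', hm2⟩ := h2
  have hs : s = s' := by
    obtain ⟨-, -, ⟨a, ha, hac⟩, -, -⟩ := hm1
    obtain ⟨-, -, ⟨a', ha', hac'⟩, -, -⟩ := hm2
    rw [ha] at ha'
    cases ha'
    exact call_stack_eq h hac hac'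
  subst hs
  rcases lt_trichotomy j1 j2 with hlt | heq | hgt
  · exact absurd (matched_ret_lt_false h hm1 hm2 hlt) not_false
  · exact heq
  · exact absurd (matched_ret_lt_false h hm2 hm1 hgt) not_false

lemma muAny_call_unique (h : CRAlphabet K A) {w : List A} {i1 i2 j : ℕ}
    (h1 : MuAny h w i1 j) (h2 : MuAny h w i2 j) : i1 = i2 := by
  obtain ⟨s, hm1⟩ := h1
  obtain ⟨s', hm2⟩ := h2
  have hs : s = s' := by
    obtain ⟨-, -, -, ⟨b, hb, hbr⟩, -⟩ := hm1
    obtain ⟨-, -, -, ⟨b', hb', hbr'⟩, -⟩ := hm2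
    rw [hb] at hb'
    cases hb'
    exact ret_stack_eq h hbr hbr'
  subst hs
  rcases lt_trichotomy i1 i2 with hlt | heq | hgt
  · exact absurd (matched_call_lt_false h hm1 hm2 hlt) not_false
  · exact heq
  · exact absurd (matched_call_lt_false h hm2 hm1 hgt) not_false

end Uniq

section Iso
variable {A : Type}

lemma distLE_refl {K : ℕ} (h : CRAlphabet K A) (w : List A) (r c : ℕ) :
    DistLE h w r c c := by
  cases r with
  | zero => rfl
  | succ d => exact Or.inl rfl

lemma mem_ball {K : ℕ} (h : CRAlphabet K A) (w : List A) (r c j : ℕ) :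
    j ∈ ball h w r c ↔ DistLE h w r c j := Iff.rfl

namespace SphIsoF

variable {h : CRAlphabet 2 A} {r : ℕ} {v w : List A} {c i : ℕ} {f : ℕ → ℕ}

lemma mapsTo (hf : SphIsoF h r v c w i f) {j : ℕ} (hj : DistLE h v r c j) :
    DistLE h w r i (f j) :=
  hf.2.2.2.1.mapsTo hj

lemma label (hf : SphIsoF h r v c w i f) {j : ℕ} (hj : DistLE h v r c j) :
    v[j]? = w[(f j)]? :=
  hf.2.2.2.2.1 j hj

lemma succ_iff (hf : SphIsoF h r v c w i f) {j k : ℕ} (hj : DistLE h v r c j)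
    (hk : DistLE h v r c k) :
    (k = j + 1 ∧ k < v.length) ↔ (f k = f j + 1 ∧ f k < w.length) :=
  (hf.2.2.2.2.2 j hj k hk).1

lemma matched_iff (hf : SphIsoF h r v c w i f) {j k : ℕ} (hj : DistLE h v r c j)
    (hk : DistLE h v r c k) (s : Fin 2) :
    Matched h v s j k ↔ Matched h w s (f j) (f k) :=
  (hf.2.2.2.2.2 j hj k hk).2 s

lemma muAny_iff (hf : SphIsoF h r v c w i f) {j k : ℕ} (hj : DistLE h v r c j)
    (hk : DistLE h v r c k) :
    MuAny h v j k ↔ MuAny h w (f j) (f k) :=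
  exists_congr fun s => hf.matched_iff hj hk s

lemma id_iso (hc : c < v.length) : SphIsoF h r v c v c id :=
  ⟨hc, hc, rfl, Set.bijOn_id _, fun _ _ => rfl, fun _ _ _ _ => ⟨Iff.rfl, fun _ => Iff.rfl⟩⟩

lemma comp {u : List A} {m : ℕ} {g : ℕ → ℕ} (hf : SphIsoF h r v c w i f)
    (hg : SphIsoF h r w i u m g) : SphIsoF h r v c u m (g ∘ f) := by
  obtain ⟨hc, hi, hfc, hbij, hlab, hedge⟩ := hf
  obtain ⟨-, hm, hgc, hbij', hlab', hedge'⟩ := hg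
  refine ⟨hc, hm, by simp [hfc, hgc], hbij'.comp hbij, ?_, ?_⟩
  · intro j hj
    rw [hlab j hj, hlab' (f j) (hbij.mapsTo hj)]
    rfl
  · intro j hj k hk
    have hj' := hbij.mapsTo hj
    have hk' := hbij.mapsTo hk
    constructor
    · exact (hedge j hj k hk).1.trans ((hedge' (f j) hj' (f k) hk').1)
    · intro s
      exact ((hedge j hj k hk).2 s).trans ((hedge' (f j) hj' (f k) hk').2 s)

end SphIsoF

lemma eiso_refl {h : CRAlphabet 2 A} {r : ℕ} {E : ESph A}
    (hc : E.ctr < E.word.length) : EIso h r E E :=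
  ⟨rfl, id, SphIsoF.id_iso hc, rfl⟩

lemma eiso_trans {h : CRAlphabet 2 A} {r : ℕ} {E1 E2 E3 : ESph A}
    (h12 : EIso h r E1 E2) (h23 : EIso h r E2 E3) : EIso h r E1 E3 := by
  obtain ⟨hc12, f, hf, hfa⟩ := h12
  obtain ⟨hc23, g, hg, hga⟩ := h23
  exact ⟨hc12.trans hc23, g ∘ f, hf.comp hg, by simp [hfa, hga]⟩

lemma memE_of_iso {h : CRAlphabet 2 A} {r : ℕ} {𝓔 : Set (ESph A)} {E1 E2 : ESph A}
    (h12 : EIso h r E1 E2) (hm : MemE h r 𝓔 E2) : MemE h r 𝓔 E1 := by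
  obtain ⟨F, hF, h2F⟩ := hm
  exact ⟨F, hF, eiso_trans h12 h2F⟩

end Iso

section Run
variable {A : Type}

/-- One simulation step. -/
def Sim (h : CRAlphabet 2 A) (r : ℕ) (w : List A) (ρ : ℕ → Set (ESph A))
    (E : ESph A) (x y p q : ℕ) : Prop :=
  MemE h r (ρ q) (setAct E y) ∧
  (SSucc h r E x y → q = p + 1 ∧ q < w.length) ∧
  (SSucc h r E y x → p = q + 1 ∧ p < w.length) ∧
  (SMu h r E x y → MuAny h w p q) ∧
  (SMu h r E y x → MuAny h w q p)

variable {h : CRAlphabet 2 A} {r : ℕ} {w : List A} {ρ : ℕ → Set (ESph A)}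

lemma no_mu_zero : ¬ ∃ jc, MuAny h w jc 0 := by
  rintro ⟨jc, s, hM⟩
  exact Nat.not_lt_zero jc hM.1

lemma run_at (hrun : IsRunB h r w ρ) {p : ℕ} (hp : p < w.length) :
    ∃ a, w[p]? = some a ∧ (∀ F ∈ ρ p, LabelAt F = some a) ∧
      ValidState h r (ρ p) ∧
      Cond27 h r (if p = 0 then ∅ else ρ (p - 1)) (ρ p) a ∧
      ((∃ jc, MuAny h w jc p ∧ Cond3'7' h r (ρ jc) (ρ p)) ∨
       ((¬ ∃ jc, MuAny h w jc p) ∧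
         ∀ F ∈ ρ p, ¬ ∃ j', SMu h r F j' F.act)) := by
  rcases Nat.eq_zero_or_pos p with hp0 | hp0
  · subst hp0
    obtain ⟨a, ha, htr⟩ := hrun.1
    obtain ⟨-, hvs, -, hcond1, hC27⟩ := htr
    exact ⟨a, ha, hC27.1, hvs, by simpa using hC27,
      Or.inr ⟨no_mu_zero, hcond1⟩⟩
  · obtain ⟨a, ha, hbr⟩ := hrun.2 p hp0 hp
    have hne : p ≠ 0 := Nat.pos_iff_ne_zero.mp hp0
    rcases hbr with ⟨jc, hjc, htr⟩ | ⟨hno, htr⟩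
    · obtain ⟨-, -, hvs, -, -, -, hC27, hC37⟩ := htr
      exact ⟨a, ha, hC27.1, hvs, by rw [if_neg hne]; exact hC27,
        Or.inl ⟨jc, hjc, hC37⟩⟩
    · obtain ⟨-, hvs, -, hcond1, hC27⟩ := htr
      exact ⟨a, ha, hC27.1, hvs, by rw [if_neg hne]; exact hC27,
        Or.inr ⟨hno, hcond1⟩⟩

lemma sAdj_balls {E : ESph A} {x y : ℕ} (hadj : SAdj h r E x y) :
    DistLE h E.word r E.ctr x ∧ DistLE h E.word r E.ctr y := by
  rcases hadj with hs | hs | hm | hm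
  · exact ⟨hs.1, hs.2.1⟩
  · exact ⟨hs.2.1, hs.1⟩
  · exact ⟨hm.1, hm.2.1⟩
  · exact ⟨hm.2.1, hm.1⟩

lemma label_of_memE (hrun : IsRunB h r w ρ) {E : ESph A} {y q : ℕ}
    (hq : q < w.length) (hmem : MemE h r (ρ q) (setAct E y))
    (hball : DistLE h E.word r E.ctr y) : E.word[y]? = w[q]? := by
  obtain ⟨F, hF, hcol, f, hf, hact⟩ := hmem
  obtain ⟨a, ha, hlabs, -⟩ := run_at hrun hq
  have h1 : E.word[y]? = F.word[(f y)]? := hf.label hball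
  have h2 : f y = F.act := hact
  rw [h1, h2]
  rw [ha]
  exact hlabs F hF

lemma iso_transport {E F : ESph A} {x y : ℕ} (hiso : EIso h r (setAct E x) F)
    (hx : DistLE h E.word r E.ctr x) (hy : DistLE h E.word r E.ctr y) :
    ∃ y', EIso h r (setAct E y) (setAct F y') ∧
      (SSucc h r E x y → SSucc h r F F.act y') ∧
      (SSucc h r E y x → SSucc h r F y' F.act) ∧
      (SMu h r E x y → SMu h r F F.act y') ∧
      (SMu h r E y x → SMu h r F y' F.act) := by
  obtain ⟨hcol, f, hf, hact⟩ := hiso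
  have hf' : SphIsoF h r E.word E.ctr F.word F.ctr f := hf
  have hact' : f x = F.act := hact
  have hdx : DistLE h F.word r F.ctr (f x) := hf'.mapsTo hx
  have hdy : DistLE h F.word r F.ctr (f y) := hf'.mapsTo hy
  refine ⟨f y, ⟨hcol, f, hf, rfl⟩, ?_, ?_, ?_, ?_⟩
  · rintro ⟨-, -, hsucc⟩
    have := (hf'.succ_iff hx hy).mp hsucc
    rw [hact'] at this
    exact ⟨hact' ▸ hdx, hdy, this⟩
  · rintro ⟨-, -, hsucc⟩
    have := (hf'.succ_iff hy hx).mp hsucc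
    rw [hact'] at this
    exact ⟨hdy, hact' ▸ hdx, this⟩
  · rintro ⟨-, -, hmu⟩
    have := (hf'.muAny_iff hx hy).mp hmu
    rw [hact'] at this
    exact ⟨hact' ▸ hdx, hdy, this⟩
  · rintro ⟨-, -, hmu⟩
    have := (hf'.muAny_iff hy hx).mp hmu
    rw [hact'] at this
    exact ⟨hdy, hact' ▸ hdx, this⟩

lemma take_drop_self (w : List A) (n : ℕ) : (w.take n).drop n = [] :=
  List.drop_eq_nil_of_le (by simp)

lemma step_exists (hrun : IsRunB h r w ρ) (hacc : AcceptingB h r w ρ)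
    {E : ESph A} {x y p : ℕ} (hp : p < w.length)
    (hmem : MemE h r (ρ p) (setAct E x)) (hlab : E.word[x]? = w[p]?)
    (hadj : SAdj h r E x y) : ∃ q, Sim h r w ρ E x y p q := by
  obtain ⟨hx, hy⟩ := sAdj_balls hadj
  obtain ⟨F, hF, hiso⟩ := hmem
  obtain ⟨y', hisoy, hT1, hT2, hT3, hT4⟩ := iso_transport hiso hx hy
  by_cases hs1 : SSucc h r E x y
  · -- forward successor step
    have hsF : SSucc h r F F.act y' := hT1 hs1
    have hplt : p + 1 < w.length := by
      rcases Nat.lt_or_ge (p + 1) w.length with hlt | hge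
      · exact hlt
      · exfalso
        have hpe : p = w.length - 1 := by omega
        have hfin := hacc.1 F (by rw [← hpe]; exact hF)
        exact hfin.1 ⟨y', hsF⟩
    obtain ⟨a, ha, hlabs, hvs, hC27, -⟩ := run_at hrun hplt
    rw [if_neg (Nat.succ_ne_zero p), Nat.add_sub_cancel] at hC27
    have hmemy : MemE h r (ρ (p + 1)) (setAct E y) :=
      memE_of_iso hisoy (hC27.2.2.2.2.2 F hF y' hsF)
    refine ⟨p + 1, hmemy, fun _ => ⟨rfl, hplt⟩, ?_, ?_, ?_⟩
    · intro hs2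
      exfalso
      have h1 := hs1.2.2.1
      have h2 := hs2.2.2.1
      omega
    · rintro ⟨-, -, s, hM⟩
      obtain ⟨a0, ha0, ha0c⟩ := hM.2.2.1
      obtain ⟨b0, hb0, hb0r⟩ := hM.2.2.2.1
      refine ⟨s, Nat.lt_succ_self p, hplt, ⟨a0, by rw [← hlab]; exact ha0, ha0c⟩,
        ⟨b0, ?_, hb0r⟩, ?_⟩
      · rw [← label_of_memE hrun hplt hmemy hy]; exact hb0
      · rw [take_drop_self]; exact SWellFormed.nil
    · rintro ⟨-, -, s, hM⟩
      have h1 := hM.1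
      have h2 := hs1.2.2.1
      omega
  · by_cases hs2 : SSucc h r E y x
    · -- backward successor step
      have hsF : SSucc h r F y' F.act := hT2 hs2
      obtain ⟨a, ha, hlabs, hvs, hC27, -⟩ := run_at hrun hp
      by_cases hp0 : p = 0
      · exfalso
        rw [if_pos hp0] at hC27
        obtain ⟨G, hG, -⟩ := hC27.2.2.2.2.1 F hF y' hsF
        exact hG
      rw [if_neg hp0] at hC27
      have hmemy : MemE h r (ρ (p - 1)) (setAct E y) :=
        memE_of_iso hisoy (hC27.2.2.2.2.1 F hF y' hsF)
      have hq1 : p - 1 + 1 = p := Nat.succ_pred_eq_of_pos (Nat.pos_of_ne_zero hp0)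
      have hq1' : p - 1 < w.length := by omega
      refine ⟨p - 1, hmemy, fun hs1' => absurd hs1' hs1, fun _ => ⟨hq1.symm, hp⟩,
        ?_, ?_⟩
      · rintro ⟨-, -, s, hM⟩
        have h1 := hM.1
        have h2 := hs2.2.2.1
        omega
      · rintro ⟨-, -, s, hM⟩
        obtain ⟨a0, ha0, ha0c⟩ := hM.2.2.1
        obtain ⟨b0, hb0, hb0r⟩ := hM.2.2.2.1
        refine ⟨s, by omega, hp,
          ⟨a0, by rw [← label_of_memE hrun hq1' hmemy hy]; exact ha0, ha0c⟩,
          ⟨b0, by rw [← hlab]; exact hb0, hb0r⟩, ?_⟩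
        rw [hq1, take_drop_self]; exact SWellFormed.nil
    · by_cases hm1 : SMu h r E x y
      · -- forward matching step
        have hsF : SMu h r F F.act y' := hT3 hm1
        obtain ⟨q, hμ⟩ := hacc.2 p hp ⟨F, hF, y', hsF⟩
        obtain ⟨s0, hM0⟩ := hμ
        have hqlt : q < w.length := hM0.2.1
        obtain ⟨a, ha, hlabs, hvs, -, hrest⟩ := run_at hrun hqlt
        rcases hrest with ⟨jc, hjc, hC37⟩ | ⟨hno, -⟩
        · have hjcp : jc = p := muAny_call_unique h hjc ⟨s0, hM0⟩
          subst hjcp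
          have hmemy : MemE h r (ρ q) (setAct E y) :=
            memE_of_iso hisoy (hC37.2.2.2.2 F hF y' hsF)
          refine ⟨q, hmemy, fun hs1' => absurd hs1' hs1,
            fun hs2' => absurd hs2' hs2, fun _ => ⟨s0, hM0⟩, ?_⟩
          rintro ⟨-, -, s, hM⟩
          have h1 := hM.1
          have h2 := hm1.2.2
          obtain ⟨s', hM'⟩ := h2
          have := hM'.1
          omega
        · exact absurd ⟨p, s0, hM0⟩ hno
      · -- backward matching step
        have hm2 : SMu h r E y x := by
          rcases hadj with h1 | h2 | h3 | h4
          · exact absurd h1 hs1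
          · exact absurd h2 hs2
          · exact absurd h3 hm1
          · exact h4
        have hsF : SMu h r F y' F.act := hT4 hm2
        obtain ⟨a, ha, hlabs, hvs, -, hrest⟩ := run_at hrun hp
        rcases hrest with ⟨jc, hjc, hC37⟩ | ⟨-, hcond1⟩
        · have hmemy : MemE h r (ρ jc) (setAct E y) :=
            memE_of_iso hisoy (hC37.2.2.2.1 F hF y' hsF)
          refine ⟨jc, hmemy, fun hs1' => absurd hs1' hs1,
            fun hs2' => absurd hs2' hs2, ?_, fun _ => hjc⟩
          rintro ⟨-, -, s, hM⟩
          obtain ⟨s', hM'⟩ := hm2.2.2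
          have h1 := hM.1
          have h2 := hM'.1
          omega
        · exact absurd ⟨y', hsF⟩ (hcond1 F hF)

lemma sim_lt {E : ESph A} {x y p q : ℕ} (hadj : SAdj h r E x y)
    (hp : p < w.length) (hsim : Sim h r w ρ E x y p q) : q < w.length := by
  rcases hadj with hs | hs | hm | hm
  · exact (hsim.2.1 hs).2
  · have := (hsim.2.2.1 hs).1; omega
  · obtain ⟨s, hM⟩ := hsim.2.2.2.1 hm
    exact hM.2.1
  · obtain ⟨s, hM⟩ := hsim.2.2.2.2 hm
    have := hM.1; omega

lemma step_unique {E : ESph A} {x y p q q' : ℕ} (hadj : SAdj h r E x y)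
    (h1 : Sim h r w ρ E x y p q) (h2 : Sim h r w ρ E x y p q') : q = q' := by
  rcases hadj with hs | hs | hm | hm
  · rw [(h1.2.1 hs).1, (h2.2.1 hs).1]
  · have e1 := (h1.2.2.1 hs).1
    have e2 := (h2.2.2.1 hs).1
    omega
  · exact muAny_ret_unique h (h1.2.2.2.1 hm) (h2.2.2.2.1 hm)
  · exact muAny_call_unique h (h1.2.2.2.2 hm) (h2.2.2.2.2 hm)

end Run


/-- soundness of accepting runs of the sphere automaton on
paths.  Let `ρ` be an accepting run of `B_r` on `w`, `i` a position, and `E`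
the (unique) extended sphere of `ρ(i)` whose active node is its center.  Then
every path `j 0 = γ, j 1, …, j d` through the Gaifman graph of `E` starting at
the center is simulated by a unique sequence of positions `ii 0 = i, …, ii d`
of `w`: `E[j k] ∈ ρ(ii k)` (so labels agree), and each sphere edge
`(j k, j (k+1))` is simulated by a corresponding edge `(ii k, ii (k+1))` of
`w` (`⋖`-edges map to `⋖`-edges and `μ`-edges to `μ`-edges, in the same
direction). -/
theorem stmt12 {A : Type} (h : CRAlphabet 2 A) (r : ℕ) (w : List A)
    (hw : w ≠ []) (ρ : ℕ → Set (ESph A))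
    (hrun : IsRunB h r w ρ) (hacc : AcceptingB h r w ρ)
    (i : ℕ) (hi : i < w.length) (E : ESph A) (hE : E ∈ ρ i)
    (hEc : E.act = E.ctr)
    (d : ℕ) (j : ℕ → ℕ) (hj0 : j 0 = E.ctr)
    (hpath : ∀ k < d, SAdj h r E (j k) (j (k + 1))) :
    ∃ ii : ℕ → ℕ,
      (ii 0 = i ∧
       (∀ k ≤ d, MemE h r (ρ (ii k)) (setAct E (j k))) ∧
       (∀ k ≤ d, E.word[(j k)]? = w[(ii k)]?) ∧
       (∀ k < d,
         (SSucc h r E (j k) (j (k + 1)) →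
            ii (k + 1) = ii k + 1 ∧ ii (k + 1) < w.length) ∧
         (SSucc h r E (j (k + 1)) (j k) →
            ii k = ii (k + 1) + 1 ∧ ii k < w.length) ∧
         (SMu h r E (j k) (j (k + 1)) → MuAny h w (ii k) (ii (k + 1))) ∧
         (SMu h r E (j (k + 1)) (j k) → MuAny h w (ii (k + 1)) (ii k)))) ∧
      (∀ ii' : ℕ → ℕ,
        (ii' 0 = i ∧
         (∀ k ≤ d, MemE h r (ρ (ii' k)) (setAct E (j k))) ∧
         (∀ k ≤ d, E.word[(j k)]? = w[(ii' k)]?) ∧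
         (∀ k < d,
           (SSucc h r E (j k) (j (k + 1)) →
              ii' (k + 1) = ii' k + 1 ∧ ii' (k + 1) < w.length) ∧
           (SSucc h r E (j (k + 1)) (j k) →
              ii' k = ii' (k + 1) + 1 ∧ ii' k < w.length) ∧
           (SMu h r E (j k) (j (k + 1)) → MuAny h w (ii' k) (ii' (k + 1))) ∧
           (SMu h r E (j (k + 1)) (j k) → MuAny h w (ii' (k + 1)) (ii' k)))) →
        ∀ k ≤ d, ii' k = ii k) := by
  classical
  obtain ⟨a0, -, -, hvs, -, -⟩ := run_at hrun hi
  have hctr : E.ctr < E.word.length := (hvs.1 E hE).1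
  have hE0 : setAct E (j 0) = E := by
    have hj0' : j 0 = E.act := by rw [hj0, ← hEc]
    rw [hj0']
    cases E; rfl
  have hmem0 : MemE h r (ρ i) (setAct E (j 0)) := by
    rw [hE0]; exact ⟨E, hE, eiso_refl hctr⟩
  have hball : ∀ k ≤ d, DistLE h E.word r E.ctr (j k) := by
    intro k hk
    cases k with
    | zero => rw [hj0]; exact distLE_refl h E.word r E.ctr
    | succ k => exact (sAdj_balls (hpath k (by omega))).2
  let ii : ℕ → ℕ := fun k =>
    Nat.rec i (fun k q => Classical.epsilon (Sim h r w ρ E (j k) (j (k + 1)) q)) k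
  have hii0 : ii 0 = i := rfl
  have inv : ∀ k ≤ d, MemE h r (ρ (ii k)) (setAct E (j k)) ∧
      ii k < w.length ∧ E.word[(j k)]? = w[(ii k)]? := by
    intro k
    induction k with
    | zero =>
      intro _
      exact ⟨hmem0, hi, label_of_memE hrun hi hmem0 (hball 0 (Nat.zero_le d))⟩
    | succ k ih =>
      intro hk
      obtain ⟨hm, hlen, hl⟩ := ih (by omega)
      have hadj := hpath k (by omega)
      have hex := step_exists hrun hacc hlen hm hl hadj
      have hsim : Sim h r w ρ E (j k) (j (k + 1)) (ii k) (ii (k + 1)) :=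
        Classical.epsilon_spec hex
      have hqlt := sim_lt hadj hlen hsim
      exact ⟨hsim.1, hqlt, label_of_memE hrun hqlt hsim.1 (hball (k + 1) hk)⟩
  have sim' : ∀ k < d, Sim h r w ρ E (j k) (j (k + 1)) (ii k) (ii (k + 1)) := by
    intro k hk
    obtain ⟨hm, hlen, hl⟩ := inv k (by omega)
    exact Classical.epsilon_spec (step_exists hrun hacc hlen hm hl (hpath k hk))
  refine ⟨ii, ⟨hii0, fun k hk => (inv k hk).1, fun k hk => (inv k hk).2.2,
    fun k hk => ?_⟩, ?_⟩
  · have hs := sim' k hk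
    exact ⟨hs.2.1, hs.2.2.1, hs.2.2.2.1, hs.2.2.2.2⟩
  · rintro ii' ⟨h0', hm', hl', he'⟩ k hk
    induction k with
    | zero => rw [h0', hii0]
    | succ k ih =>
      have hk' : k < d := by omega
      have heq := ih (by omega)
      have hsim' : Sim h r w ρ E (j k) (j (k + 1)) (ii k) (ii' (k + 1)) := by
        refine ⟨hm' (k + 1) hk, ?_, ?_, ?_, ?_⟩
        · intro hs; rw [← heq]; exact (he' k hk').1 hs
        · intro hs; rw [← heq]; exact (he' k hk').2.1 hs
        · intro hs; rw [← heq]; exact (he' k hk').2.2.1 hs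
        · intro hs; rw [← heq]; exact (he' k hk').2.2.2 hs
      exact step_unique (hpath k hk') hsim' (sim' k hk')
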